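/- Let q be a prime and χ₀ the principal Dirichlet character mod q. For every integer n, cos(2πn/q) = 1 - (q/(q-1))·χ₀(n) + (√q/(q-1))·Σ_{χ mod q, χ even, χ≠χ₀} ε̄_χ·χ(n), where ε_χ = τ(χ)/√q is the normalized Gauss sum (root number) of χ. -/

import Mathlib

open Complex Finset
open scoped Classical

/-- The normalized Gauss sum (root number) of an even Dirichlet character mod `q`. -/
noncomputable def rootNumberEven {q : ℕ} [NeZero q] (χ : DirichletCharacter ℂ q) : ℂ :=
  (∑ a : ZMod q, χ a * Complex.exp (2 * Real.pi * Complex.I * (a.val : ℂ) / q)) / Real.sqrt q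

section helpers
variable {q : ℕ} [NeZero q]

lemma hpsi (a : ZMod q) :
    Complex.exp (2 * Real.pi * Complex.I * (a.val : ℂ) / q) = ZMod.stdAddChar a := by
  rw [ZMod.stdAddChar_apply, ZMod.toCircle_apply]

lemma hpsi_conj (a : ZMod q) :
    (starRingEnd ℂ) (ZMod.stdAddChar a) = ZMod.stdAddChar (-a) := by
  have h1 : ZMod.stdAddChar a = ZMod.stdAddChar ((a.val : ℤ) : ZMod q) := by
    norm_cast
    rw [ZMod.natCast_zmod_val]
  have h2 : (-a : ZMod q) = ((-(a.val : ℤ) : ℤ) : ZMod q) := by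
    push_cast
    rw [ZMod.natCast_zmod_val]
  rw [h1, h2, ZMod.stdAddChar_coe, ZMod.stdAddChar_coe, ← Complex.exp_conj]
  congr 1
  simp only [map_div₀, map_mul, Complex.conj_I, Complex.conj_ofReal, map_intCast,
    map_natCast, map_ofNat]
  push_cast
  ring

lemma hpsi_sum (hq1 : 1 < q) : ∑ a : ZMod q, ZMod.stdAddChar (a : ZMod q) = 0 := by
  haveI : Fact (1 < q) := ⟨hq1⟩
  refine AddChar.sum_eq_zero_of_ne_one ?_
  have := ZMod.isPrimitive_stdAddChar q (a := 1) one_ne_zero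
  rwa [AddChar.mulShift_one] at this

lemma hroot_conj (χ : DirichletCharacter ℂ q) :
    (starRingEnd ℂ) (rootNumberEven χ)
      = (∑ a : ZMod q, χ⁻¹ a * ZMod.stdAddChar (-a)) / Real.sqrt q := by
  rw [rootNumberEven, map_div₀, map_sum, Complex.conj_ofReal]
  congr 1
  refine Finset.sum_congr rfl fun a _ => ?_
  rw [hpsi a, map_mul, hpsi_conj a, starRingEnd_apply, MulChar.star_apply']

end helpers

section helpers2
variable {q : ℕ} [NeZero q]

lemma heven_sum (hq : q.Prime) (b : ZMod q) :
    ∑ χ ∈ Finset.univ.filter (fun χ : DirichletCharacter ℂ q => χ.Even), χ b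
      = (if b = 1 then ((q : ℂ) - 1) else 0) / 2 + (if b = -1 then ((q : ℂ) - 1) else 0) / 2 := by
  have totq : ((q.totient : ℕ) : ℂ) = (q : ℂ) - 1 := by
    rw [Nat.totient_prime hq, Nat.cast_sub hq.one_lt.le, Nat.cast_one]
  have h1 : ∀ χ : DirichletCharacter ℂ q,
      (if χ.Even then χ b else 0) = (χ b + χ (-b)) / 2 := by
    intro χ
    rcases χ.even_or_odd with h | h
    · rw [if_pos h, h.eval_neg]
      ring
    · rw [if_neg h.not_even, h.eval_neg]
      ring
  rw [Finset.sum_filter]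
  simp_rw [h1, add_div]
  rw [Finset.sum_add_distrib, ← Finset.sum_div, ← Finset.sum_div,
    DirichletCharacter.sum_characters_eq, DirichletCharacter.sum_characters_eq]
  simp only [neg_eq_iff_eq_neg, totq]

end helpers2

/-- for prime `q` and any integer `n`,
`cos(2πn/q) = 1 - (q/(q-1))·χ₀(n) + (√q/(q-1))·∑_{χ even, χ ≠ χ₀} ε̄_χ χ(n)`. -/
theorem cos_eq_char_expansion (q : ℕ) [NeZero q] (hq : q.Prime) (n : ℤ) :
    (Real.cos (2 * Real.pi * (n : ℝ) / q) : ℂ) =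
      1 - (q : ℂ) / ((q : ℂ) - 1) * (1 : DirichletCharacter ℂ q) (n : ZMod q)
        + (Real.sqrt q : ℂ) / ((q : ℂ) - 1) *
          ∑ χ ∈ Finset.univ.filter
              (fun χ : DirichletCharacter ℂ q => χ.Even ∧ χ ≠ 1),
            (starRingEnd ℂ) (rootNumberEven χ) * χ (n : ZMod q) := by
  haveI : Fact q.Prime := ⟨hq⟩
  have hq1 : 1 < q := hq.one_lt
  set ψ : AddChar (ZMod q) ℂ := ZMod.stdAddChar with hψdef
  set m : ZMod q := (n : ZMod q) with hm
  have hqC : (q : ℂ) - 1 ≠ 0 := sub_ne_zero.mpr (by exact_mod_cast hq1.ne')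
  have hsq : ((Real.sqrt q : ℝ) : ℂ) ≠ 0 := by
    norm_cast
    positivity
  -- rewrite the character sum, pulling out 1/√q
  have hS : ∑ χ ∈ Finset.univ.filter
        (fun χ : DirichletCharacter ℂ q => χ.Even ∧ χ ≠ 1),
        (starRingEnd ℂ) (rootNumberEven χ) * χ m
      = (∑ χ ∈ Finset.univ.filter
          (fun χ : DirichletCharacter ℂ q => χ.Even ∧ χ ≠ 1),
          (∑ a : ZMod q, χ⁻¹ a * ψ (-a)) * χ m) / Real.sqrt q := by
    rw [Finset.sum_div]
    exact Finset.sum_congr rfl fun χ _ => by rw [hroot_conj, div_mul_eq_mul_div]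
  have hfilter : Finset.univ.filter (fun χ : DirichletCharacter ℂ q => χ.Even ∧ χ ≠ 1)
      = (Finset.univ.filter (fun χ : DirichletCharacter ℂ q => χ.Even)).erase 1 := by
    ext χ
    simp [Finset.mem_erase, and_comm]
  have hone_mem : (1 : DirichletCharacter ℂ q)
      ∈ Finset.univ.filter (fun χ : DirichletCharacter ℂ q => χ.Even) := by
    simp only [Finset.mem_filter, Finset.mem_univ, true_and]
    show (1 : DirichletCharacter ℂ q) (-1) = 1
    exact MulChar.one_apply isUnit_one.neg
  have hT : ∀ f : DirichletCharacter ℂ q → ℂ,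
      ∑ χ ∈ Finset.univ.filter (fun χ : DirichletCharacter ℂ q => χ.Even ∧ χ ≠ 1), f χ
        = (∑ χ ∈ Finset.univ.filter (fun χ : DirichletCharacter ℂ q => χ.Even), f χ) - f 1 := by
    intro f
    rw [hfilter, eq_sub_iff_add_eq, Finset.sum_erase_add _ _ hone_mem]
  have hsum0 : ∑ a : ZMod q, (1 : DirichletCharacter ℂ q)⁻¹ a * ψ (-a) = -1 := by
    rw [inv_one]
    have step : ∀ a : ZMod q, (1 : DirichletCharacter ℂ q) a * ψ (-a)
        = ψ (-a) - (if a = 0 then 1 else 0) := by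
      intro a
      rcases eq_or_ne a 0 with rfl | h
      · have h0 : (1 : DirichletCharacter ℂ q) 0 = 0 :=
          MulChar.map_nonunit _ (not_isUnit_zero (M₀ := ZMod q))
        simp [h0]
      · rw [MulChar.one_apply (isUnit_iff_ne_zero.mpr h), one_mul, if_neg h, sub_zero]
    simp_rw [step]
    rw [Finset.sum_sub_distrib]
    have h2 : ∑ a : ZMod q, ψ (-a) = ∑ a : ZMod q, ψ a :=
      Fintype.sum_equiv (Equiv.neg (ZMod q)) _ _ (fun a => rfl)
    rw [h2, hψdef, hpsi_sum hq1]
    simp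
  have hF : ∑ χ ∈ Finset.univ.filter (fun χ : DirichletCharacter ℂ q => χ.Even),
        (∑ a : ZMod q, χ⁻¹ a * ψ (-a)) * χ m
      = ∑ a : ZMod q,
          (∑ χ ∈ Finset.univ.filter (fun χ : DirichletCharacter ℂ q => χ.Even),
            χ (a⁻¹ * m)) * ψ (-a) := by
    simp_rw [Finset.sum_mul]
    rw [Finset.sum_comm]
    refine Finset.sum_congr rfl fun a _ => ?_
    refine Finset.sum_congr rfl fun χ _ => ?_
    rw [MulChar.inv_apply', map_mul]
    ring
  rw [hS, hT, hsum0, hF]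
  rcases eq_or_ne m 0 with hm0 | hm0
  · -- the non-unit case: q ∣ n
    have hz : (1 : DirichletCharacter ℂ q) m = 0 := by
      rw [hm0]; exact MulChar.map_nonunit _ (not_isUnit_zero (M₀ := ZMod q))
    have hz2 : ∀ a : ZMod q,
        (∑ χ ∈ Finset.univ.filter (fun χ : DirichletCharacter ℂ q => χ.Even), χ (a⁻¹ * m))
          = 0 := by
      intro a
      refine Finset.sum_eq_zero fun χ _ => ?_
      rw [hm0, mul_zero]
      exact MulChar.map_nonunit _ (not_isUnit_zero (M₀ := ZMod q))
    obtain ⟨k, hk⟩ := (ZMod.intCast_zmod_eq_zero_iff_dvd n q).mp (hm ▸ hm0)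
    have hcos : (2 * Real.pi * (n : ℝ) / q) = k * (2 * Real.pi) := by
      have hq0 : (q : ℝ) ≠ 0 := Nat.cast_ne_zero.mpr (NeZero.ne q)
      rw [hk]
      push_cast
      field_simp
    rw [hcos, Real.cos_int_mul_two_pi]
    simp only [hz, hz2, zero_mul, Finset.sum_const_zero, mul_zero, sub_zero]
    push_cast
    field_simp
    ring
  · -- the unit case
    have hmu : IsUnit m := isUnit_iff_ne_zero.mpr hm0
    have hone : (1 : DirichletCharacter ℂ q) m = 1 := MulChar.one_apply hmu
    have hcond1 : ∀ a : ZMod q, (a⁻¹ * m = 1) ↔ (a = m) := by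
      intro a
      rcases eq_or_ne a 0 with rfl | ha
      · simp only [inv_zero, zero_mul]
        exact iff_of_false (fun h => zero_ne_one h) (fun h => hm0 h.symm)
      · exact inv_mul_eq_one₀ ha
    have hcond2 : ∀ a : ZMod q, (a⁻¹ * m = -1) ↔ (a = -m) := by
      intro a
      rcases eq_or_ne a 0 with rfl | ha
      · simp only [inv_zero, zero_mul]
        refine iff_of_false (fun h => one_ne_zero (α := ZMod q) (neg_eq_zero.mp h.symm))
          (fun h => hm0 (neg_eq_zero.mp h.symm))
      · constructor
        · intro h
          have : a⁻¹ * (-m) = 1 := by rw [mul_neg, h, neg_neg]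
          have := (inv_mul_eq_one₀ ha).mp this
          exact this
        · rintro rfl
          rw [inv_neg, neg_mul, inv_mul_cancel₀ hm0]
    have hFval : ∑ a : ZMod q,
        (∑ χ ∈ Finset.univ.filter (fun χ : DirichletCharacter ℂ q => χ.Even),
          χ (a⁻¹ * m)) * ψ (-a)
        = ((q : ℂ) - 1) / 2 * ψ (-m) + ((q : ℂ) - 1) / 2 * ψ m := by
      have e1 : ∀ a : ZMod q,
          (∑ χ ∈ Finset.univ.filter (fun χ : DirichletCharacter ℂ q => χ.Even),
            χ (a⁻¹ * m)) * ψ (-a)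
          = (if a = m then ((q : ℂ) - 1) / 2 * ψ (-a) else 0)
            + (if a = -m then ((q : ℂ) - 1) / 2 * ψ (-a) else 0) := by
        intro a
        rw [heven_sum hq]
        simp only [hcond1 a, hcond2 a]
        split_ifs <;> ring
      simp_rw [e1]
      rw [Finset.sum_add_distrib, Finset.sum_ite_eq' Finset.univ m,
        Finset.sum_ite_eq' Finset.univ (-m)]
      simp [neg_neg]
    have hcos : (Real.cos (2 * Real.pi * (n : ℝ) / q) : ℂ) = (ψ m + ψ (-m)) / 2 := by
      have h1 : ψ m = Complex.exp (2 * Real.pi * Complex.I * n / q) := by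
        rw [hm, hψdef, ZMod.stdAddChar_coe]
      have h2 : ψ (-m) = Complex.exp (-(2 * Real.pi * Complex.I * n / q)) := by
        have hneg : -m = (((-n : ℤ)) : ZMod q) := by rw [hm]; push_cast; ring
        rw [hneg, hψdef, ZMod.stdAddChar_coe]
        congr 1
        push_cast
        ring
      rw [h1, h2, Complex.ofReal_cos, Complex.cos]
      congr 2
      · push_cast; ring
      · push_cast; ring
    rw [hFval, hcos, hone]
    have hψm : ψ m * ψ (-m) = 1 := by
      rw [← AddChar.map_add_eq_mul, add_neg_cancel, AddChar.map_zero_eq_one]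
    field_simp
    ring
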